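/- Let γ = (γ_1, …, γ_n) ∈ ℂⁿ be nonresonant, i.e. for every c ∈ ℤⁿ, Σ_{j=1}^n c_j γ_j = 0 implies c = 0, and let H_ss = Σ_{j=1}^n γ_j x_j y_j in ℂ[x_1, …, x_n, y_1, …, y_n]. If H is a polynomial with {H_ss, H} = 0, then H is a polynomial in the n products x_j y_j: there exists a polynomial Q ∈ ℂ[z_1, …, z_n] such that H = Q(x_1 y_1, …, x_n y_n). -/

import Mathlib

open MvPolynomial

/-- The standard Poisson bracket `{H, F} = Σ_j (∂H/∂x_j ∂F/∂y_j − ∂H/∂y_j ∂F/∂x_j)`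
on `ℂ[x_1, …, x_n, y_1, …, y_n]`, where `x_j = X (Sum.inl j)` and `y_j = X (Sum.inr j)`. -/
noncomputable def poissonBracket {n : ℕ} (H F : MvPolynomial (Fin n ⊕ Fin n) ℂ) :
    MvPolynomial (Fin n ⊕ Fin n) ℂ :=
  ∑ j : Fin n,
    (pderiv (Sum.inl j) H * pderiv (Sum.inr j) F
      - pderiv (Sum.inr j) H * pderiv (Sum.inl j) F)

lemma aux_X_mul_pderiv (σ : Type) [DecidableEq σ] (i : σ) (m : σ →₀ ℕ) (a : ℂ) :
    X i * pderiv i (monomial m a) = C (m i : ℂ) * monomial m a := by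
  rw [pderiv_monomial, C_mul_monomial, X, monomial_mul, one_mul, mul_comm a]
  rcases Nat.eq_zero_or_pos (m i) with h | h
  · simp [h]
  · have hm : (Finsupp.single i 1) + (m - Finsupp.single i 1) = m := by
      ext j
      by_cases hj : j = i
      · subst hj; simp [Finsupp.single_apply]; omega
      · simp [Finsupp.single_apply, Ne.symm hj, hj]
    rw [hm]

lemma aux_bracket_sum {n : ℕ} (P : MvPolynomial (Fin n ⊕ Fin n) ℂ)
    {α : Type} (s : Finset α) (f : α → MvPolynomial (Fin n ⊕ Fin n) ℂ) :
    poissonBracket P (∑ m ∈ s, f m) = ∑ m ∈ s, poissonBracket P (f m) := by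
  unfold poissonBracket
  simp only [map_sum, Finset.mul_sum, ← Finset.sum_sub_distrib]
  exact Finset.sum_comm

lemma aux_bracket_monomial (n : ℕ) (γ : Fin n → ℂ)
    (m : Fin n ⊕ Fin n →₀ ℕ) (a : ℂ) :
    poissonBracket (∑ i : Fin n, C (γ i) * X (Sum.inl i) * X (Sum.inr i))
      (monomial m a)
    = C (∑ j : Fin n, γ j * ((m (Sum.inr j) : ℂ) - (m (Sum.inl j) : ℂ)))
        * monomial m a := by
  have hl : ∀ j : Fin n, pderiv (Sum.inl j)
      (∑ i : Fin n, C (γ i) * X (Sum.inl i) * X (Sum.inr i) :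
        MvPolynomial (Fin n ⊕ Fin n) ℂ) = C (γ j) * X (Sum.inr j) := by
    intro j
    rw [map_sum, Finset.sum_eq_single j]
    · simp [pderiv_mul, pderiv_X, Pi.single_apply, mul_comm]
    · intro i _ hij
      simp [pderiv_mul, pderiv_X, Pi.single_apply, hij]
    · simp
  have hr : ∀ j : Fin n, pderiv (Sum.inr j)
      (∑ i : Fin n, C (γ i) * X (Sum.inl i) * X (Sum.inr i) :
        MvPolynomial (Fin n ⊕ Fin n) ℂ) = C (γ j) * X (Sum.inl j) := by
    intro j
    rw [map_sum, Finset.sum_eq_single j]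
    · simp [pderiv_mul, pderiv_X, Pi.single_apply, mul_comm]
    · intro i _ hij
      simp [pderiv_mul, pderiv_X, Pi.single_apply, hij]
    · simp
  unfold poissonBracket
  rw [map_sum, Finset.sum_mul]
  apply Finset.sum_congr rfl
  intro j _
  rw [hl j, hr j, mul_assoc, mul_assoc, aux_X_mul_pderiv, aux_X_mul_pderiv]
  rw [← mul_assoc, ← mul_assoc, ← sub_mul]
  congr 1
  rw [← C_mul, ← C_mul, ← C_sub, mul_sub]

/-- If `γ` is nonresonant, then any polynomial `H` with
`{H_ss, H} = 0` is a polynomial in the products `x_j y_j`. -/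
theorem nonresonant_normal_form_is_function_of_actions
    (n : ℕ) (γ : Fin n → ℂ)
    (hres : ∀ c : Fin n → ℤ, ∑ j : Fin n, (c j : ℂ) * γ j = 0 → c = 0)
    (Hss : MvPolynomial (Fin n ⊕ Fin n) ℂ)
    (hHss : Hss = ∑ j : Fin n, C (γ j) * X (Sum.inl j) * X (Sum.inr j))
    (H : MvPolynomial (Fin n ⊕ Fin n) ℂ)
    (hH : poissonBracket Hss H = 0) :
    ∃ Q : MvPolynomial (Fin n) ℂ,
      H = aeval (fun j : Fin n => X (Sum.inl j) * X (Sum.inr j)) Q := by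
  subst hHss
  set lam : (Fin n ⊕ Fin n →₀ ℕ) → ℂ :=
    fun m => ∑ j : Fin n, γ j * ((m (Sum.inr j) : ℂ) - (m (Sum.inl j) : ℂ)) with hlam
  have hsum : poissonBracket (∑ i : Fin n, C (γ i) * X (Sum.inl i) * X (Sum.inr i)) H
      = ∑ m ∈ H.support, monomial m (lam m * coeff m H) := by
    conv_lhs => rw [← support_sum_monomial_coeff H]
    rw [aux_bracket_sum]
    apply Finset.sum_congr rfl
    intro m hm
    rw [aux_bracket_monomial n γ m (coeff m H), C_mul_monomial]
  have hkey : ∀ m ∈ H.support, ∀ j : Fin n, m (Sum.inl j) = m (Sum.inr j) := by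
    intro m hm j
    have h0 : lam m * coeff m H = 0 := by
      have := congrArg (coeff m) (hsum.symm.trans hH)
      rwa [coeff_sum, Finset.sum_eq_single m (fun b _ hb => by
        rw [coeff_monomial, if_neg hb]) (fun h => absurd hm h), coeff_monomial,
        if_pos rfl, coeff_zero] at this
    have hc := mem_support_iff.mp hm
    have hl0 : lam m = 0 := by
      rcases mul_eq_zero.mp h0 with h | h
      · exact h
      · exact absurd h hc
    have := hres (fun j => (m (Sum.inr j) : ℤ) - (m (Sum.inl j) : ℤ)) (by
      rw [← hl0, hlam]
      apply Finset.sum_congr rfl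
      intro i _
      push_cast
      ring)
    have := congrFun this j
    simp at this
    omega
  refine ⟨∑ m ∈ H.support,
    monomial (Finsupp.equivFunOnFinite.symm fun j => m (Sum.inl j)) (coeff m H), ?_⟩
  rw [map_sum]
  conv_lhs => rw [← support_sum_monomial_coeff H]
  apply Finset.sum_congr rfl
  intro m hm
  rw [aeval_monomial]
  rw [Finsupp.prod_fintype _ _ (fun j => pow_zero _)]
  simp only [Finsupp.coe_equivFunOnFinite_symm]
  rw [algebraMap_eq, monomial_eq]
  congr 1
  rw [Finsupp.prod_fintype _ _ (fun s => pow_zero _), Fintype.prod_sum_type,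
    ← Finset.prod_mul_distrib]
  apply Finset.prod_congr rfl
  intro j _
  rw [mul_pow, ← hkey m hm j]
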